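/- For every ω ∈ (0,1) and every t with 0 < t < ω, the function x ↦ sinh(ωx) e^{−t x coth(x)} − sinh((ω−t)x) is square-integrable on (0, ∞), i.e. ∫_0^∞ ( sinh(ωx) e^{−t x coth(x)} − sinh((ω−t)x) )² dx < ∞. (Equivalently, the map x ↦ φ_ω(x)ψ_t(x) − e^t((ω−t)/ω) φ_{ω−t}(x), with φ_λ(x) = sinh(λx)/(λ sinh x) and ψ_t(x) = e^{t(1−x coth x)}, is square-integrable on (0,∞) with respect to the measure sinh²(x) dx.) -/

import Mathlib

open Real MeasureTheory

set_option maxHeartbeats 1000000 in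
/-- For `ω ∈ (0,1)` and `0 < t < ω`, the function
`x ↦ sinh(ωx) e^{-t x coth x} - sinh((ω-t)x)` is square-integrable on `(0, ∞)`. -/
theorem stmt8 (t ω : ℝ) (hω : ω ∈ Set.Ioo (0 : ℝ) 1) (ht : 0 < t) (htω : t < ω) :
    MeasureTheory.IntegrableOn
      (fun x : ℝ =>
        (Real.sinh (ω * x) * Real.exp (-t * (x * Real.cosh x / Real.sinh x)) -
            Real.sinh ((ω - t) * x)) ^ 2)
      (Set.Ioi 0) := by
  obtain ⟨hω0, hω1⟩ := hω
  set a : ℝ := min (ω - t) (1 + t - ω) with ha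
  have ha0 : 0 < a := lt_min (by linarith) (by linarith)
  have ha1 : a ≤ ω - t := min_le_left _ _
  have ha2 : a ≤ 1 + t - ω := min_le_right _ _
  -- pointwise bound
  have hbound : ∀ x : ℝ, 0 < x →
      |Real.sinh (ω * x) * Real.exp (-t * (x * Real.cosh x / Real.sinh x)) -
          Real.sinh ((ω - t) * x)| ≤ (1 + t) * Real.exp (-a * x) := by
    intro x hx
    have hs : 0 < Real.sinh x := Real.sinh_pos_iff.2 hx
    have hxs : x < Real.sinh x := Real.self_lt_sinh_iff.2 hx
    set c : ℝ := x * Real.cosh x / Real.sinh x with hc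
    have hes : Real.cosh x - Real.sinh x = Real.exp (-x) := Real.cosh_sub_sinh x
    have hcx : c - x = x * Real.exp (-x) / Real.sinh x := by
      rw [hc]
      field_simp
      linear_combination hes
    have hcx0 : 0 ≤ c - x := by
      rw [hcx]; positivity
    have hcxe : c - x ≤ Real.exp (-x) := by
      rw [hcx, div_le_iff₀ hs]
      nlinarith [Real.exp_pos (-x)]
    have hexp1 : Real.exp (-t * c) ≤ Real.exp (-t * x) :=
      Real.exp_le_exp.2 (by nlinarith)
    have hexp2 : Real.exp (-t * x) - Real.exp (-t * c) ≤ Real.exp (-t * x) * (t * (c - x)) := by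
      have h1 : Real.exp (-t * c) = Real.exp (-t * x) * Real.exp (-(t * (c - x))) := by
        rw [← Real.exp_add]; ring_nf
      have h2 : 1 - t * (c - x) ≤ Real.exp (-(t * (c - x))) := by
        linarith [Real.add_one_le_exp (-(t * (c - x)))]
      have h3 : 0 < Real.exp (-t * x) := Real.exp_pos _
      nlinarith
    have hsinhω : Real.sinh (ω * x) ≤ Real.exp (ω * x) / 2 := by
      rw [Real.sinh_eq]
      have := Real.exp_pos (-(ω * x))
      linarith
    have hsinhω0 : 0 ≤ Real.sinh (ω * x) := (Real.sinh_pos_iff.2 (mul_pos hω0 hx)).le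
    -- B identity
    have e1 : Real.exp (ω * x) * Real.exp (-t * x) = Real.exp ((ω - t) * x) := by
      rw [← Real.exp_add]; ring_nf
    have e2 : Real.exp (-(ω * x)) * Real.exp (-t * x) = Real.exp (-((ω + t) * x)) := by
      rw [← Real.exp_add]; ring_nf
    have hB : Real.sinh (ω * x) * Real.exp (-t * x) - Real.sinh ((ω - t) * x) =
        (Real.exp (-((ω - t) * x)) - Real.exp (-((ω + t) * x))) / 2 := by
      rw [Real.sinh_eq, Real.sinh_eq]
      linear_combination e1 / 2 - e2 / 2
    set f : ℝ := Real.sinh (ω * x) * Real.exp (-t * c) - Real.sinh ((ω - t) * x) with hf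
    have hup : f ≤ Real.exp (-((ω - t) * x)) / 2 := by
      have h := mul_le_mul_of_nonneg_left hexp1 hsinhω0
      have h2 := Real.exp_pos (-((ω + t) * x))
      rw [hf]
      nlinarith
    have hlow : -(t / 2 * Real.exp ((ω - 1 - t) * x)) ≤ f := by
      have hBnn : 0 ≤ Real.sinh (ω * x) * Real.exp (-t * x) - Real.sinh ((ω - t) * x) := by
        rw [hB]
        have : Real.exp (-((ω + t) * x)) ≤ Real.exp (-((ω - t) * x)) :=
          Real.exp_le_exp.2 (by nlinarith)
        linarith
      have h1 : Real.sinh (ω * x) * (Real.exp (-t * x) - Real.exp (-t * c)) ≤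
          Real.sinh (ω * x) * (Real.exp (-t * x) * (t * (c - x))) :=
        mul_le_mul_of_nonneg_left hexp2 hsinhω0
      have h2 : Real.sinh (ω * x) * (Real.exp (-t * x) * (t * (c - x))) ≤
          Real.exp (ω * x) / 2 * (Real.exp (-t * x) * (t * Real.exp (-x))) := by
        apply mul_le_mul hsinhω _ (by positivity) (by positivity)
        apply mul_le_mul_of_nonneg_left _ (Real.exp_pos _).le
        exact mul_le_mul_of_nonneg_left hcxe ht.le
      have key : Real.exp (ω * x) * Real.exp (-t * x) * Real.exp (-x) =
          Real.exp ((ω - 1 - t) * x) := by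
        rw [← Real.exp_add, ← Real.exp_add]; ring_nf
      have h3 : Real.exp (ω * x) / 2 * (Real.exp (-t * x) * (t * Real.exp (-x))) =
          t / 2 * Real.exp ((ω - 1 - t) * x) := by
        linear_combination t / 2 * key
      rw [hf]
      nlinarith
    clear_value f c
    rw [abs_le]
    have hE : 0 < Real.exp (-a * x) := Real.exp_pos _
    constructor
    · have h1 : Real.exp ((ω - 1 - t) * x) ≤ Real.exp (-a * x) :=
        Real.exp_le_exp.2 (mul_le_mul_of_nonneg_right (by linarith) hx.le)
      have h2 : t / 2 * Real.exp ((ω - 1 - t) * x) ≤ (1 + t) * Real.exp (-a * x) :=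
        mul_le_mul (by linarith) h1 (Real.exp_pos _).le (by linarith)
      linarith
    · have h1 : Real.exp (-((ω - t) * x)) ≤ Real.exp (-a * x) := by
        apply Real.exp_le_exp.2
        rw [neg_mul]
        exact neg_le_neg (mul_le_mul_of_nonneg_right ha1 hx.le)
      have h2 : Real.exp (-a * x) / 2 ≤ (1 + t) * Real.exp (-a * x) := by
        nlinarith [mul_nonneg ht.le hE.le]
      linarith
  have hg : IntegrableOn (fun x : ℝ => ((1 + t) * Real.exp (-a * x)) ^ 2) (Set.Ioi 0) := by
    have h : IntegrableOn (fun x : ℝ => (1 + t) ^ 2 * Real.exp (-(2 * a) * x)) (Set.Ioi 0) :=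
      (exp_neg_integrableOn_Ioi 0 (by linarith : (0:ℝ) < 2 * a)).const_mul ((1 + t) ^ 2)
    refine h.congr_fun (fun x hx => ?_) measurableSet_Ioi
    rw [mul_pow, ← Real.exp_nat_mul]
    ring_nf
  have hcont : ContinuousOn
      (fun x : ℝ =>
        (Real.sinh (ω * x) * Real.exp (-t * (x * Real.cosh x / Real.sinh x)) -
            Real.sinh ((ω - t) * x)) ^ 2) (Set.Ioi 0) := by
    apply ContinuousOn.pow
    apply ContinuousOn.sub
    · apply ContinuousOn.mul
      · exact (Real.continuous_sinh.comp (continuous_const.mul continuous_id)).continuousOn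
      · apply Real.continuous_exp.comp_continuousOn
        apply ContinuousOn.mul continuousOn_const
        apply ContinuousOn.div
        · exact (continuous_id.mul Real.continuous_cosh).continuousOn
        · exact Real.continuous_sinh.continuousOn
        · intro x hx
          exact ne_of_gt (Real.sinh_pos_iff.2 hx)
    · exact (Real.continuous_sinh.comp (continuous_const.mul continuous_id)).continuousOn
  apply MeasureTheory.Integrable.mono' hg
    (hcont.aestronglyMeasurable measurableSet_Ioi)
  rw [MeasureTheory.ae_restrict_iff' measurableSet_Ioi]
  filter_upwards with x hx
  have h := hbound x hx
  rw [Real.norm_eq_abs, abs_pow]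
  exact pow_le_pow_left₀ (abs_nonneg _) h 2
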